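/- The set X = {(x, sin x) : x ∈ ℝ} ⊆ ℝ² is Lipschitz normally embedded and its tangent cone at infinity is the line {(x,0) : x ∈ ℝ}, yet X is not contained in any affine line (and is not an algebraic set). -/

import Mathlib

open Set Filter Metric
open scoped ENNReal NNReal

noncomputable section

/-- The inner (length) extended distance on a subset `X`. -/
def innerEDist {E : Type*} [EMetricSpace E] (X : Set E) (p q : E) : ENNReal :=
  ⨅ (γ : Path p q) (_ : Set.range γ ⊆ X), eVariationOn (fun t => γ t) Set.univ

/-- `E` is a tangent cone of `X` at infinity. -/
def IsTangentConeAtInfinity {V : Type*} [NormedAddCommGroup V] [NormedSpace ℝ V]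
    (X E : Set V) : Prop :=
  ∃ (t : ℕ → ℝ) (D : Set V),
    (∀ j, 0 < t j) ∧ Tendsto t atTop atTop ∧ D ⊆ Metric.sphere (0 : V) 1 ∧
    Tendsto (fun j => EMetric.hausdorffEdist
        ((fun x => (t j)⁻¹ • x) '' (X ∩ Metric.sphere (0 : V) (t j))) D) atTop (nhds 0) ∧
    E = {x | ∃ s : ℝ, 0 ≤ s ∧ ∃ v ∈ D, x = s • v}

/-- A real algebraic subset of `ℝⁿ`: the common zero set of a family of polynomials. -/
def IsRealAlgebraicSet {n : ℕ} (X : Set (EuclideanSpace ℝ (Fin n))) : Prop :=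
  ∃ S : Set (MvPolynomial (Fin n) ℝ),
    X = {x | ∀ p ∈ S, MvPolynomial.eval (WithLp.ofLp x : Fin n → ℝ) p = 0}

abbrev E2 := EuclideanSpace ℝ (Fin 2)
def G (x : ℝ) : E2 := (WithLp.equiv 2 (Fin 2 → ℝ)).symm ![x, Real.sin x]

lemma G_dist (x y : ℝ) : dist (G x) (G y) = Real.sqrt ((x-y)^2 + (Real.sin x - Real.sin y)^2) := by
  rw [EuclideanSpace.dist_eq]
  simp [G, Fin.sum_univ_two, Real.dist_eq, sq_abs]

lemma sin_lip (x y : ℝ) : |Real.sin x - Real.sin y| ≤ |x - y| := by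
  rw [Real.sin_sub_sin]
  calc |2 * Real.sin ((x - y) / 2) * Real.cos ((x + y) / 2)|
      = 2 * |Real.sin ((x - y) / 2)| * |Real.cos ((x + y) / 2)| := by
        rw [abs_mul, abs_mul]; norm_num
    _ ≤ 2 * |(x - y) / 2| * 1 := by
        have h1 : |Real.sin ((x - y) / 2)| ≤ |(x - y) / 2| := Real.abs_sin_le_abs
        have h2 : |Real.cos ((x + y) / 2)| ≤ 1 := Real.abs_cos_le_one _
        nlinarith [abs_nonneg (Real.sin ((x - y) / 2)), abs_nonneg ((x - y) / 2),
          abs_nonneg (Real.cos ((x + y) / 2))]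
    _ = |x - y| := by rw [abs_div, abs_two]; ring

lemma G_lipschitz : LipschitzWith 2 G := by
  apply LipschitzWith.of_dist_le_mul
  intro x y
  rw [G_dist]
  have hs := sin_lip x y
  have h1 : (x-y)^2 + (Real.sin x - Real.sin y)^2 ≤ (2 * dist x y)^2 := by
    rw [Real.dist_eq]
    nlinarith [sq_abs (x-y), sq_abs (Real.sin x - Real.sin y), abs_nonneg (x-y),
      abs_nonneg (Real.sin x - Real.sin y)]
  calc Real.sqrt ((x-y)^2 + (Real.sin x - Real.sin y)^2) ≤ Real.sqrt ((2 * dist x y)^2) :=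
        Real.sqrt_le_sqrt h1
    _ = 2 * dist x y := Real.sqrt_sq (by positivity)


lemma Icc_unit : (Set.Icc (0:unitInterval) 1) = Set.univ := by
  ext t
  simp only [Set.mem_Icc, Set.mem_univ, iff_true]
  exact ⟨unitInterval.nonneg' , unitInterval.le_one'⟩

lemma mono_affine {a c : ℝ} (hc : 0 ≤ c) :
    MonotoneOn (fun t : unitInterval => a + (t:ℝ) * c) Set.univ := by
  intro x _ y _ hxy
  have : (x:ℝ) ≤ y := hxy
  dsimp
  nlinarith

lemma evar_mono_affine {a c : ℝ} (hc : 0 ≤ c) :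
    eVariationOn (fun t : unitInterval => a + (t:ℝ) * c) Set.univ ≤ ENNReal.ofReal c := by
  have := (mono_affine hc (a := a)).eVariationOn_le (a := 0) (b := 1)
    (Set.mem_univ _) (Set.mem_univ _)
  rw [Icc_unit, Set.univ_inter] at this
  simpa using this

lemma evar_affine (a c : ℝ) :
    eVariationOn (fun t : unitInterval => a + (t:ℝ) * c) Set.univ ≤ ENNReal.ofReal |c| := by
  rcases le_or_gt 0 c with hc | hc
  · rw [abs_of_nonneg hc]; exact evar_mono_affine hc
  · have h1 : (fun t : unitInterval => a + (t:ℝ) * c) =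
        (fun x : ℝ => -x) ∘ (fun t : unitInterval => -a + (t:ℝ) * (-c)) := by
      funext t; simp; ring
    rw [h1]
    have hlip : LipschitzOnWith 1 (fun x : ℝ => -x) Set.univ :=
      LipschitzWith.lipschitzOnWith (LipschitzWith.of_dist_le_mul (by
        intro x y; simp [dist_neg_neg]))
    refine le_trans (hlip.comp_eVariationOn_le (Set.mapsTo_univ _ _)) ?_
    rw [abs_of_neg hc]
    simpa using evar_mono_affine (a := -a) (by linarith : (0:ℝ) ≤ -c)

def Xg : Set E2 := {p : E2 | p 1 = Real.sin (p 0)}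

lemma G_mem (x : ℝ) : G x ∈ Xg := by simp [Xg, G]

lemma G_eq_of_mem {p : E2} (hp : p ∈ Xg) : G (p 0) = p := by
  ext i
  fin_cases i
  · simp [G]
  · simpa [G] using hp.symm

lemma part1 : ∃ lam : ℝ, ∀ p ∈ Xg, ∀ q ∈ Xg,
    innerEDist Xg p q ≤ ENNReal.ofReal (lam * ‖p - q‖) := by
  refine ⟨2, fun p hp q hq => ?_⟩
  set a := p 0
  set b := q 0
  -- the path
  have hcont : Continuous fun t : unitInterval => G (a + (t : ℝ) * (b - a)) :=
    G_lipschitz.continuous.comp (by continuity)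
  let γ : Path p q :=
    { toFun := fun t => G (a + (t : ℝ) * (b - a))
      continuous_toFun := hcont
      source' := by simpa using G_eq_of_mem hp
      target' := by simpa using G_eq_of_mem hq }
  have hrange : Set.range γ ⊆ Xg := by
    rintro _ ⟨t, rfl⟩; exact G_mem _
  refine le_trans (iInf₂_le γ hrange) ?_
  -- variation bound
  have key : eVariationOn (fun t => γ t) Set.univ ≤ ENNReal.ofReal (2 * |b - a|) := by
    have heq : (fun t : unitInterval => γ t) =
        G ∘ (fun t : unitInterval => a + (t:ℝ) * (b - a)) := rfl
    rw [heq]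
    have h1 := (G_lipschitz.lipschitzOnWith (s := Set.univ)).comp_eVariationOn_le
      (Set.mapsTo_univ (fun t : unitInterval => a + (t:ℝ) * (b - a)) Set.univ)
    refine h1.trans ?_
    have h2 := evar_affine a (b - a)
    have h3 : ((2 : ℝ≥0) : ℝ≥0∞) * eVariationOn (fun t : unitInterval => a + (t:ℝ) * (b - a))
        Set.univ ≤ ((2 : ℝ≥0) : ℝ≥0∞) * ENNReal.ofReal |b - a| := by
      exact mul_le_mul_right h2 _
    refine h3.trans (le_of_eq ?_)
    rw [ENNReal.ofReal_mul (by norm_num : (0:ℝ) ≤ 2)]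
    congr 1
    simp [ENNReal.ofReal]
  refine key.trans (ENNReal.ofReal_le_ofReal ?_)
  have hab : |b - a| ≤ ‖p - q‖ := by
    have h0 : ‖p - q‖ = Real.sqrt ((p 0 - q 0)^2 + (p 1 - q 1)^2) := by
      rw [EuclideanSpace.norm_eq]
      simp [Fin.sum_univ_two, sq_abs]
    rw [h0, show b - a = -(p 0 - q 0) by simp [a, b], abs_neg]
    rw [← Real.sqrt_sq_eq_abs]
    exact Real.sqrt_le_sqrt (by nlinarith [sq_nonneg (p 1 - q 1)])
  nlinarith [norm_nonneg (p - q), abs_nonneg (b - a)]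

lemma part3 : ¬ ∃ a v : E2, Xg ⊆ {q | ∃ t : ℝ, q = a + t • v} := by
  rintro ⟨a, v, h⟩
  obtain ⟨t1, h1⟩ := h (G_mem 0)
  obtain ⟨t2, h2⟩ := h (G_mem (Real.pi / 2))
  obtain ⟨t3, h3⟩ := h (G_mem Real.pi)
  have e10 : (0:ℝ) = a 0 + t1 * v 0 := by
    have := congrArg (fun q : E2 => q 0) h1; simpa [G] using this
  have e11 : (0:ℝ) = a 1 + t1 * v 1 := by
    have := congrArg (fun q : E2 => q 1) h1; simpa [G] using this
  have e20 : Real.pi / 2 = a 0 + t2 * v 0 := by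
    have := congrArg (fun q : E2 => q 0) h2; simpa [G] using this
  have e21 : (1:ℝ) = a 1 + t2 * v 1 := by
    have := congrArg (fun q : E2 => q 1) h2; simpa [G] using this
  have e30 : Real.pi = a 0 + t3 * v 0 := by
    have := congrArg (fun q : E2 => q 0) h3; simpa [G] using this
  have e31 : (0:ℝ) = a 1 + t3 * v 1 := by
    have := congrArg (fun q : E2 => q 1) h3; simpa [G] using this
  have hpi := Real.pi_pos
  -- (t3 - t1) v = (π, 0), (t2 - t1) v = (π/2, 1)
  have hv1 : (t3 - t1) * v 1 = 0 := by linarith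
  have hv0 : (t3 - t1) * v 0 = Real.pi := by linarith
  have hw0 : (t2 - t1) * v 0 = Real.pi / 2 := by linarith
  have hw1 : (t2 - t1) * v 1 = 1 := by linarith
  have ht31 : t3 - t1 ≠ 0 := by intro h0; rw [h0, zero_mul] at hv0; linarith
  have hv1' : v 1 = 0 := by
    rcases mul_eq_zero.1 hv1 with h0 | h0
    · exact absurd h0 ht31
    · exact h0
  rw [hv1', mul_zero] at hw1
  linarith

lemma part4 : ¬ IsRealAlgebraicSet Xg := by
  rintro ⟨S, hS⟩
  -- the point (1, 0) satisfies every polynomial in S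
  have key : ∀ p ∈ S, MvPolynomial.eval (![1, 0] : Fin 2 → ℝ) p = 0 := by
    intro p hp
    set q : Polynomial ℝ := MvPolynomial.eval₂ Polynomial.C (![Polynomial.X, 0]) p with hq
    have hqeval : ∀ y : ℝ, q.eval y = MvPolynomial.eval (![y, 0] : Fin 2 → ℝ) p := by
      intro y
      have := MvPolynomial.eval₂_comp_left (Polynomial.evalRingHom y) Polynomial.C
        (![Polynomial.X, 0]) p
      rw [← hq] at this
      rw [show q.eval y = (Polynomial.evalRingHom y) q from rfl, this]
      have h1 : (Polynomial.evalRingHom y).comp Polynomial.C = RingHom.id ℝ := by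
        ext r; simp
      have h2 : ((Polynomial.evalRingHom y) ∘ (![Polynomial.X, 0])) = (![y, 0] : Fin 2 → ℝ) := by
        funext i; fin_cases i <;> simp
      rw [h1, h2]
      rw [MvPolynomial.eval₂_id]
    -- q vanishes at k π for all k : ℕ
    have hroot : ∀ k : ℕ, q.IsRoot (k * Real.pi) := by
      intro k
      have hm : G (k * Real.pi) ∈ Xg := G_mem _
      rw [hS] at hm
      have := hm p hp
      have hGe : ((G (k * Real.pi)) : Fin 2 → ℝ) = ![k * Real.pi, 0] := by
        funext i; fin_cases i <;> simp [G, Real.sin_nat_mul_pi]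
      rw [hGe] at this
      rw [Polynomial.IsRoot, hqeval]
      exact this
    have hq0 : q = 0 := by
      apply Polynomial.eq_zero_of_infinite_isRoot
      apply Set.Infinite.mono (s := Set.range (fun k : ℕ => (k : ℝ) * Real.pi))
      · rintro _ ⟨k, rfl⟩; exact hroot k
      · apply Set.infinite_range_of_injective
        intro j k hjk
        have := Real.pi_pos
        exact_mod_cast mul_right_cancel₀ this.ne' hjk
    have := hqeval 1
    rw [hq0] at this
    simpa using this.symm
  have : (WithLp.toLp 2 (![1, 0] : Fin 2 → ℝ) : E2) ∈ Xg := by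
    rw [hS]; exact key
  have : (0:ℝ) = Real.sin 1 := by simpa [Xg] using this
  have h1 : 0 < Real.sin 1 :=
    Real.sin_pos_of_pos_of_lt_pi one_pos (by linarith [Real.pi_gt_three])
  linarith

lemma G_norm (x : ℝ) : ‖G x‖ = Real.sqrt (x^2 + (Real.sin x)^2) := by
  rw [EuclideanSpace.norm_eq]; simp [G, Fin.sum_univ_two, sq_abs]

def pe : E2 := (WithLp.equiv 2 (Fin 2 → ℝ)).symm ![1, 0]
def pme : E2 := (WithLp.equiv 2 (Fin 2 → ℝ)).symm ![-1, 0]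
def D0 : Set E2 := {pe, pme}

lemma pe_norm : ‖pe‖ = 1 := by
  rw [EuclideanSpace.norm_eq]; simp [pe, Fin.sum_univ_two]
lemma pme_norm : ‖pme‖ = 1 := by
  rw [EuclideanSpace.norm_eq]; simp [pme, Fin.sum_univ_two]
lemma D0_sphere : D0 ⊆ Metric.sphere (0 : E2) 1 := by
  rintro y (rfl | rfl) <;> simp [mem_sphere_iff_norm, pe_norm, pme_norm]

lemma dist_pe {t x : ℝ} (ht : 2 ≤ t) (hx : 0 ≤ x) (he : x^2 + (Real.sin x)^2 = t^2) :
    dist (t⁻¹ • G x) pe ≤ 2 / t := by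
  have ht0 : (0:ℝ) < t := by linarith
  have hs1 : (Real.sin x)^2 ≤ 1 := Real.sin_sq_le_one x
  have hxt : x ≤ t := by nlinarith [sq_nonneg (Real.sin x)]
  have htx : t - x ≤ 1 / 2 := by nlinarith
  have h4 : (t⁻¹ * x - 1)^2 + (t⁻¹ * Real.sin x - 0)^2 ≤ (2 / t)^2 := by
    have hA : (t⁻¹ * x - 1)^2 + (t⁻¹ * Real.sin x - 0)^2
        = ((x - t)^2 + (Real.sin x)^2) / t^2 := by
      field_simp
      ring
    have hB : (x - t)^2 + (Real.sin x)^2 ≤ 4 := by nlinarith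
    rw [hA, div_pow]
    rw [div_le_div_iff₀ (by positivity) (by positivity)]
    nlinarith
  have hd : dist (t⁻¹ • G x) pe
      = Real.sqrt ((t⁻¹ * x - 1)^2 + (t⁻¹ * Real.sin x - 0)^2) := by
    rw [EuclideanSpace.dist_eq]
    simp [G, pe, Fin.sum_univ_two, Real.dist_eq, sq_abs]
  rw [hd]
  calc Real.sqrt ((t⁻¹ * x - 1)^2 + (t⁻¹ * Real.sin x - 0)^2)
      ≤ Real.sqrt ((2/t)^2) := Real.sqrt_le_sqrt h4
    _ = 2 / t := Real.sqrt_sq (by positivity)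

lemma dist_pme {t x : ℝ} (ht : 2 ≤ t) (hx : x ≤ 0) (he : x^2 + (Real.sin x)^2 = t^2) :
    dist (t⁻¹ • G x) pme ≤ 2 / t := by
  have ht0 : (0:ℝ) < t := by linarith
  have hs1 : (Real.sin x)^2 ≤ 1 := Real.sin_sq_le_one x
  have hxt : -t ≤ x := by nlinarith [sq_nonneg (Real.sin x)]
  have htx : t + x ≤ 1 / 2 := by nlinarith
  have h4 : (t⁻¹ * x - (-1))^2 + (t⁻¹ * Real.sin x - 0)^2 ≤ (2 / t)^2 := by
    have hA : (t⁻¹ * x - (-1))^2 + (t⁻¹ * Real.sin x - 0)^2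
        = ((x + t)^2 + (Real.sin x)^2) / t^2 := by
      field_simp
      ring
    have hB : (x + t)^2 + (Real.sin x)^2 ≤ 4 := by nlinarith
    rw [hA, div_pow]
    rw [div_le_div_iff₀ (by positivity) (by positivity)]
    nlinarith
  have hd : dist (t⁻¹ • G x) pme
      = Real.sqrt ((t⁻¹ * x - (-1))^2 + (t⁻¹ * Real.sin x - 0)^2) := by
    rw [EuclideanSpace.dist_eq]
    simp [G, pme, Fin.sum_univ_two, Real.dist_eq, sq_abs]
  rw [hd]
  calc Real.sqrt ((t⁻¹ * x - (-1))^2 + (t⁻¹ * Real.sin x - 0)^2)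
      ≤ Real.sqrt ((2/t)^2) := Real.sqrt_le_sqrt h4
    _ = 2 / t := Real.sqrt_sq (by positivity)

lemma norm_eq_of_eq {t x : ℝ} (ht : 0 ≤ t) (he : x^2 + (Real.sin x)^2 = t^2) :
    ‖G x‖ = t := by
  rw [G_norm, he, Real.sqrt_sq ht]

lemma eq_of_norm {t x : ℝ} (ht : 0 ≤ t) (hn : ‖G x‖ = t) :
    x^2 + (Real.sin x)^2 = t^2 := by
  rw [G_norm] at hn
  have := congrArg (·^2) hn
  simpa [Real.sq_sqrt (by positivity : (0:ℝ) ≤ x^2 + (Real.sin x)^2)] using this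

lemma exists_sol {t : ℝ} (ht : 2 ≤ t) :
    ∃ x : ℝ, 0 ≤ x ∧ x^2 + (Real.sin x)^2 = t^2 := by
  have ht0 : (0:ℝ) ≤ t := by linarith
  have hF : ContinuousOn (fun x : ℝ => x^2 + (Real.sin x)^2) (Set.Icc 0 t) := by
    fun_prop
  have hsub := intermediate_value_Icc ht0 hF
  have hmem : t^2 ∈ Set.Icc ((fun x : ℝ => x^2 + (Real.sin x)^2) 0)
      ((fun x : ℝ => x^2 + (Real.sin x)^2) t) := by
    constructor
    · simp; positivity
    · simp only
      nlinarith [sq_nonneg (Real.sin t)]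
  obtain ⟨x, hx, hfx⟩ := hsub hmem
  exact ⟨x, hx.1, hfx⟩

lemma hdist_bound {t : ℝ} (ht : 2 ≤ t) :
    EMetric.hausdorffEdist ((fun x : E2 => t⁻¹ • x) '' (Xg ∩ Metric.sphere 0 t)) D0
      ≤ ENNReal.ofReal (2 / t) := by
  have ht0 : (0:ℝ) < t := by linarith
  apply EMetric.hausdorffEdist_le_of_mem_edist
  · rintro z ⟨p, ⟨hpX, hpS⟩, rfl⟩
    rw [mem_sphere_iff_norm, sub_zero] at hpS
    set x := p 0 with hx
    have hpG : G x = p := G_eq_of_mem hpX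
    have he : x^2 + (Real.sin x)^2 = t^2 := eq_of_norm (by linarith) (by rw [hpG]; exact hpS)
    rcases le_or_gt 0 x with hx0 | hx0
    · refine ⟨pe, Or.inl rfl, ?_⟩
      rw [edist_dist]
      apply ENNReal.ofReal_le_ofReal
      rw [← hpG]
      exact dist_pe ht hx0 he
    · refine ⟨pme, Or.inr rfl, ?_⟩
      rw [edist_dist]
      apply ENNReal.ofReal_le_ofReal
      rw [← hpG]
      exact dist_pme ht hx0.le he
  · rintro y (rfl | rfl)
    · obtain ⟨x, hx0, he⟩ := exists_sol ht
      refine ⟨t⁻¹ • G x, ⟨G x, ⟨G_mem x, ?_⟩, rfl⟩, ?_⟩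
      · rw [mem_sphere_iff_norm, sub_zero]; exact norm_eq_of_eq (by linarith) he
      · rw [edist_dist, dist_comm]
        exact ENNReal.ofReal_le_ofReal (dist_pe ht hx0 he)
    · obtain ⟨x, hx0, he⟩ := exists_sol ht
      have he' : (-x)^2 + (Real.sin (-x))^2 = t^2 := by
        rw [Real.sin_neg]; linear_combination he
      refine ⟨t⁻¹ • G (-x), ⟨G (-x), ⟨G_mem (-x), ?_⟩, rfl⟩, ?_⟩
      · rw [mem_sphere_iff_norm, sub_zero]; exact norm_eq_of_eq (by linarith) he'
      · rw [edist_dist, dist_comm]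
        exact ENNReal.ofReal_le_ofReal (dist_pme ht (by linarith) he')

lemma cone_D0 : {x : E2 | ∃ s : ℝ, 0 ≤ s ∧ ∃ v ∈ D0, x = s • v} = {p : E2 | p 1 = 0} := by
  ext p
  constructor
  · rintro ⟨s, hs, v, (rfl | rfl), rfl⟩ <;> simp [pe, pme]
  · intro hp
    rcases le_or_gt 0 (p 0) with h0 | h0
    · refine ⟨p 0, h0, pe, Or.inl rfl, ?_⟩
      ext i; fin_cases i <;> simp [pe] <;> simp_all
    · refine ⟨-(p 0), by linarith, pme, Or.inr rfl, ?_⟩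
      ext i; fin_cases i <;> simp [pme] <;> simp_all

lemma tendsto_two_div {t : ℕ → ℝ} (ht : Tendsto t atTop atTop) :
    Tendsto (fun j => ENNReal.ofReal (2 / t j)) atTop (nhds 0) := by
  have h1 : Tendsto (fun j => 2 / t j) atTop (nhds 0) := Tendsto.div_atTop tendsto_const_nhds ht
  have := ENNReal.tendsto_ofReal h1
  simpa using this

lemma part2a : IsTangentConeAtInfinity Xg {p : E2 | p 1 = 0} := by
  refine ⟨fun j => (j : ℝ) + 2, D0, fun j => by positivity, ?_, D0_sphere, ?_, cone_D0.symm⟩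
  · exact tendsto_atTop_add_const_right atTop 2 tendsto_natCast_atTop_atTop
  · have htop : Tendsto (fun j : ℕ => (j : ℝ) + 2) atTop atTop :=
      tendsto_atTop_add_const_right atTop 2 tendsto_natCast_atTop_atTop
    refine tendsto_of_tendsto_of_tendsto_of_le_of_le tendsto_const_nhds
      (tendsto_two_div htop) (fun j => zero_le) (fun j => hdist_bound ?_)
    show (2:ℝ) ≤ (j:ℝ) + 2
    have : (0:ℝ) ≤ (j:ℝ) := Nat.cast_nonneg j
    linarith

lemma part2b : ∀ E, IsTangentConeAtInfinity Xg E → E = {p : E2 | p 1 = 0} := by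
  rintro E ⟨t, D, hpos, htop, hDs, hhd, rfl⟩
  suffices hD : D = D0 by rw [hD, cone_D0]
  -- hausdorffEdist D D0 = 0
  have hbd : ∀ᶠ j in atTop, EMetric.hausdorffEdist D D0 ≤
      EMetric.hausdorffEdist ((fun x : E2 => (t j)⁻¹ • x) '' (Xg ∩ Metric.sphere 0 (t j))) D
        + ENNReal.ofReal (2 / t j) := by
    filter_upwards [htop.eventually_ge_atTop 2] with j hj
    calc EMetric.hausdorffEdist D D0
        ≤ EMetric.hausdorffEdist D
            ((fun x : E2 => (t j)⁻¹ • x) '' (Xg ∩ Metric.sphere 0 (t j)))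
          + EMetric.hausdorffEdist
            ((fun x : E2 => (t j)⁻¹ • x) '' (Xg ∩ Metric.sphere 0 (t j))) D0 :=
          EMetric.hausdorffEdist_triangle
      _ ≤ _ := by
          rw [show EMetric.hausdorffEdist D _ = EMetric.hausdorffEdist _ D from Metric.hausdorffEDist_comm]
          exact add_le_add le_rfl (hdist_bound hj)
  have hsum : Tendsto (fun j => EMetric.hausdorffEdist
      ((fun x : E2 => (t j)⁻¹ • x) '' (Xg ∩ Metric.sphere 0 (t j))) D
        + ENNReal.ofReal (2 / t j)) atTop (nhds 0) := by
    simpa using Tendsto.add hhd (tendsto_two_div htop)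
  have h0 : EMetric.hausdorffEdist D D0 ≤ 0 := ge_of_tendsto hsum hbd
  have h0' : EMetric.hausdorffEdist D D0 = 0 := le_antisymm h0 zero_le
  -- conclude D = D0
  have hD0closed : IsClosed D0 := ((Set.finite_singleton pme).insert pe).isClosed
  have hclosure : closure D = D0 := by
    rw [EMetric.hausdorffEdist_zero_iff_closure_eq_closure.mp h0', hD0closed.closure_eq]
  have hDsub : D ⊆ D0 := hclosure ▸ subset_closure
  have hDfin : D.Finite := ((Set.finite_singleton pme).insert pe).subset hDsub
  have hDclosed : IsClosed D := hDfin.isClosed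
  rw [← hclosure, hDclosed.closure_eq]

/-- The graph of sine in `ℝ²` is Lipschitz normally embedded, its unique tangent cone
at infinity is the line `{(x,0)}`, yet it is not contained in any affine line and is
not an algebraic set: the real-analytic version of the rigidity theorem fails. -/
theorem sine_graph_counterexample :
    (∃ lam : ℝ, ∀ p ∈ {p : EuclideanSpace ℝ (Fin 2) | p 1 = Real.sin (p 0)},
      ∀ q ∈ {p : EuclideanSpace ℝ (Fin 2) | p 1 = Real.sin (p 0)},
        innerEDist {p : EuclideanSpace ℝ (Fin 2) | p 1 = Real.sin (p 0)} p q ≤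
          ENNReal.ofReal (lam * ‖p - q‖)) ∧
    (IsTangentConeAtInfinity {p : EuclideanSpace ℝ (Fin 2) | p 1 = Real.sin (p 0)}
        {p : EuclideanSpace ℝ (Fin 2) | p 1 = 0} ∧
      ∀ E, IsTangentConeAtInfinity {p : EuclideanSpace ℝ (Fin 2) | p 1 = Real.sin (p 0)} E →
        E = {p : EuclideanSpace ℝ (Fin 2) | p 1 = 0}) ∧
    (¬ ∃ a v : EuclideanSpace ℝ (Fin 2),
      {p : EuclideanSpace ℝ (Fin 2) | p 1 = Real.sin (p 0)} ⊆
        {q | ∃ t : ℝ, q = a + t • v}) ∧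
    ¬ IsRealAlgebraicSet {p : EuclideanSpace ℝ (Fin 2) | p 1 = Real.sin (p 0)} := by
  exact ⟨part1, ⟨part2a, part2b⟩, part3, part4⟩

end
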